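/- Let P be a finite poset containing the poset X (five elements a,b,c,g,h with a < c, b < c, c < g, c < h) as a subposet. Then the degree sequence of the 1-skeleton of O(P) differs from the degree sequence of the 1-skeleton of C(P); in particular the minimum vertex degree of the 1-skeleton of O(P) is at least |P| + 1 while the minimum vertex degree of the 1-skeleton of C(P) is at most |P|. -/

import Mathlib

/-- Indicator vector of a subset `W` of `P` in `ℝ^P`. -/
noncomputable def rho {P : Type*} (W : Set P) : P → ℝ := W.indicator fun _ => 1

/-- The order polytope of a finite poset `P`. -/
def orderPolytope (P : Type*) [Fintype P] [PartialOrder P] : Set (P → ℝ) :=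
  {f | (∀ i, 0 ≤ f i ∧ f i ≤ 1) ∧ ∀ i j : P, i ≤ j → f j ≤ f i}

/-- The chain polytope of a finite poset `P`. -/
def chainPolytope (P : Type*) [Fintype P] [PartialOrder P] : Set (P → ℝ) :=
  {f | (∀ i, 0 ≤ f i) ∧ ∀ C : Finset P, IsMaxChain (· ≤ ·) (C : Set P) → ∑ i ∈ C, f i ≤ 1}

/-- A subset `S` of a poset `P` is connected in `P` if any two of its elements are
joined by a sequence within `S` whose consecutive members are comparable in `P`. -/
def ConnIn {P : Type*} [PartialOrder P] (S : Set P) : Prop :=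
  ∀ x ∈ S, ∀ y ∈ S,
    Relation.ReflTransGen (fun u v => u ∈ S ∧ v ∈ S ∧ (u ≤ v ∨ v ≤ u)) x y

/-- The segment joining `u` and `v` is an edge (one-dimensional face) of `S`. -/
def IsEdgeOf {E : Type*} [AddCommGroup E] [Module ℝ E] (S : Set E) (u v : E) : Prop :=
  u ≠ v ∧ IsExtreme ℝ S (segment ℝ u v)

/-- The set of maximal elements of a subset of a poset. -/
def maxSet {P : Type*} [PartialOrder P] (S : Set P) : Set P :=
  {x | x ∈ S ∧ ∀ y ∈ S, x ≤ y → x = y}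

/-- The set of minimal elements of a subset of a poset. -/
def minSet {P : Type*} [PartialOrder P] (S : Set P) : Set P :=
  {x | x ∈ S ∧ ∀ y ∈ S, y ≤ x → x = y}

/-- The 1-skeleton of the order polytope, combinatorially: vertices are poset
ideals, adjacency is proper inclusion with connected difference. -/
def orderSkeleton (P : Type*) [PartialOrder P] :
    SimpleGraph {I : Set P // IsLowerSet I} :=
  SimpleGraph.fromRel fun I J => I.1 ⊂ J.1 ∧ ConnIn (J.1 \ I.1)

/-- The 1-skeleton of the chain polytope, combinatorially: vertices are antichains,
adjacency is connectedness of the symmetric difference. -/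
def chainSkeleton (P : Type*) [PartialOrder P] :
    SimpleGraph {A : Set P // IsAntichain (· ≤ ·) A} :=
  SimpleGraph.fromRel fun A B => ConnIn ((A.1 \ B.1) ∪ (B.1 \ A.1))

/-- The multiset of vertex degrees of a graph (the degree sequence, up to order). -/
noncomputable def degMultiset {V : Type*} [Fintype V] (G : SimpleGraph V) : Multiset ℕ :=
  Finset.univ.val.map fun v => (G.neighborSet v).ncard

/-- `P` contains the poset `X = {a,b,c,g,h}` with `a<c, b<c, c<g, c<h` as a subposet. -/
def ContainsX (P : Type*) [PartialOrder P] : Prop :=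
  ∃ a b c g h : P, a < c ∧ b < c ∧ c < g ∧ c < h ∧
    ¬ a ≤ b ∧ ¬ b ≤ a ∧ ¬ g ≤ h ∧ ¬ h ≤ g

/-- The pair `(I, J)` of poset ideals with `I ⊂ J` and `J \ I` connected in `P`. -/
def OmegaP {P : Type*} [PartialOrder P] (I J : Set P) : Prop :=
  IsLowerSet I ∧ IsLowerSet J ∧ I ⊂ J ∧ ConnIn (J \ I)

/-- The pair `(A, B)` of distinct antichains with connected symmetric difference. -/
def PsiP {P : Type*} [PartialOrder P] (A B : Set P) : Prop :=
  IsAntichain (· ≤ ·) A ∧ IsAntichain (· ≤ ·) B ∧ A ≠ B ∧ ConnIn ((A \ B) ∪ (B \ A))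

/-- First component of the map `Ω → Ψ`: `A = max J`. -/
def FmapA {P : Type*} [PartialOrder P] (_I J : Set P) : Set P := maxSet J

/-- Second component of the map `Ω → Ψ`:
`B = min(J \ I) ∪ (max I ∩ max J)`, with `min(J \ I) := ∅` when `|J \ I| = 1`. -/
def FmapB {P : Type*} [PartialOrder P] (I J : Set P) : Set P :=
  (if (J \ I).ncard = 1 then ∅ else minSet (J \ I)) ∪ (maxSet I ∩ maxSet J)

noncomputable instance {P : Type*} [Fintype P] [PartialOrder P] :
    Fintype {I : Set P // IsLowerSet I} := Fintype.ofFinite _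

noncomputable instance {P : Type*} [Fintype P] [PartialOrder P] :
    Fintype {A : Set P // IsAntichain (· ≤ ·) A} := Fintype.ofFinite _

section Aux

variable {P : Type*} [PartialOrder P]

private lemma connIn_hub {S : Set P} {p : P} (hp : p ∈ S)
    (h : ∀ x ∈ S, Relation.ReflTransGen
      (fun u v => u ∈ S ∧ v ∈ S ∧ (u ≤ v ∨ v ≤ u)) x p) :
    ConnIn S := by
  intro x hx y hy
  have hsymm : Symmetric (fun u v : P => u ∈ S ∧ v ∈ S ∧ (u ≤ v ∨ v ≤ u)) :=
    fun u v ⟨h1, h2, h3⟩ => ⟨h2, h1, h3.symm⟩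
  exact (h x hx).trans ((@Relation.ReflTransGen.symmetric _ _ ⟨hsymm⟩).symm _ _ (h y hy))

open Classical in
/-- The elementary neighbor of the ideal `I` associated to `x`. -/
noncomputable def Nbr (I : Set P) (x : P) : Set P :=
  if x ∈ I then I \ {y | x ≤ y} else I ∪ {y | y ≤ x}

open Classical in
/-- The extra neighbor of the ideal `I` coming from the subposet `X`. -/
noncomputable def ExtIdeal (I : Set P) (a b c g h : P) : Set P :=
  if c ∈ I then I \ {y | a ≤ y ∨ b ≤ y} else I ∪ {y | y ≤ g ∨ y ≤ h}

private lemma nbr_lower {I : Set P} (hI : IsLowerSet I) (x : P) : IsLowerSet (Nbr I x) := by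
  unfold Nbr
  split
  · intro u v hvu hu
    exact ⟨hI hvu hu.1, fun hle => hu.2 (hle.trans hvu)⟩
  · intro u v hvu hu
    rcases hu with hu | hu
    · exact Or.inl (hI hvu hu)
    · exact Or.inr (hvu.trans hu)

private lemma nbr_eq_in {I : Set P} {x : P} (hx : x ∈ I) :
    Nbr I x = I \ {y | x ≤ y} := by simp [Nbr, hx]

private lemma nbr_eq_out {I : Set P} {x : P} (hx : x ∉ I) :
    Nbr I x = I ∪ {y | y ≤ x} := by simp [Nbr, hx]

private lemma nbr_inj (I : Set P) : Function.Injective (Nbr I) := by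
  intro x y hxy
  by_cases hx : x ∈ I <;> by_cases hy : y ∈ I
  · rw [nbr_eq_in hx, nbr_eq_in hy] at hxy
    have h1 : x ∉ I \ {z | y ≤ z} := by rw [← hxy]; simp [hx]
    have h2 : y ∉ I \ {z | x ≤ z} := by rw [hxy]; simp [hy]
    simp only [Set.mem_diff, Set.mem_setOf_eq, not_and, not_not] at h1 h2
    exact le_antisymm (h2 hy) (h1 hx)
  · rw [nbr_eq_in hx, nbr_eq_out hy] at hxy
    exfalso
    have : y ∈ I \ {z | x ≤ z} := by rw [hxy]; exact Or.inr le_rfl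
    exact hy this.1
  · rw [nbr_eq_out hx, nbr_eq_in hy] at hxy
    exfalso
    have : x ∈ I \ {z | y ≤ z} := by rw [← hxy]; exact Or.inr le_rfl
    exact hx this.1
  · rw [nbr_eq_out hx, nbr_eq_out hy] at hxy
    have h1 : x ∈ I ∪ {z | z ≤ y} := by rw [← hxy]; exact Or.inr le_rfl
    have h2 : y ∈ I ∪ {z | z ≤ x} := by rw [hxy]; exact Or.inr le_rfl
    rcases h1 with h1 | h1; · exact absurd h1 hx
    rcases h2 with h2 | h2; · exact absurd h2 hy
    exact le_antisymm h1 h2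

private lemma nbr_rel_in {I : Set P} {x : P} (hx : x ∈ I) :
    Nbr I x ⊂ I ∧ ConnIn (I \ Nbr I x) := by
  rw [nbr_eq_in hx]
  constructor
  · exact ⟨Set.diff_subset, fun hsub => (hsub hx).2 le_rfl⟩
  · have hdiff : I \ (I \ {y | x ≤ y}) = I ∩ {y | x ≤ y} := by
      ext z; simp only [Set.mem_diff, Set.mem_inter_iff, Set.mem_setOf_eq]; tauto
    rw [hdiff]
    refine connIn_hub ⟨hx, le_rfl⟩ (fun z hz => Relation.ReflTransGen.single ?_)
    exact ⟨hz, ⟨hx, le_rfl⟩, Or.inr hz.2⟩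

private lemma nbr_rel_out {I : Set P} {x : P} (hx : x ∉ I) :
    I ⊂ Nbr I x ∧ ConnIn (Nbr I x \ I) := by
  rw [nbr_eq_out hx]
  constructor
  · exact ⟨Set.subset_union_left, fun hsub => hx (hsub (Or.inr (le_rfl : x ≤ x)))⟩
  · refine connIn_hub (p := x) ⟨Or.inr le_rfl, hx⟩
      (fun z hz => Relation.ReflTransGen.single ?_)
    rcases hz.1 with h | h
    · exact absurd h hz.2
    · exact ⟨hz, ⟨Or.inr le_rfl, hx⟩, Or.inl h⟩

private lemma ext_lower {I : Set P} (hI : IsLowerSet I) (a b c g h : P) :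
    IsLowerSet (ExtIdeal I a b c g h) := by
  unfold ExtIdeal
  split
  · intro u v hvu hu
    refine ⟨hI hvu hu.1, fun hle => hu.2 ?_⟩
    rcases hle with hle | hle
    · exact Or.inl (hle.trans hvu)
    · exact Or.inr (hle.trans hvu)
  · intro u v hvu hu
    rcases hu with hu | hu
    · exact Or.inl (hI hvu hu)
    · rcases hu with hu | hu
      · exact Or.inr (Or.inl (hvu.trans hu))
      · exact Or.inr (Or.inr (hvu.trans hu))

private lemma ext_rel_in {I : Set P} (hI : IsLowerSet I) {a b c : P} (g h : P)
    (hac : a < c) (hbc : b < c) (hc : c ∈ I) :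
    ExtIdeal I a b c g h ⊂ I ∧ ConnIn (I \ ExtIdeal I a b c g h) := by
  have hE : ExtIdeal I a b c g h = I \ {y | a ≤ y ∨ b ≤ y} := by simp [ExtIdeal, hc]
  have ha : a ∈ I := hI hac.le hc
  have hb : b ∈ I := hI hbc.le hc
  rw [hE]
  constructor
  · exact ⟨Set.diff_subset, fun hsub => (hsub ha).2 (Or.inl le_rfl)⟩
  · have hdiff : I \ (I \ {y | a ≤ y ∨ b ≤ y}) = I ∩ {y | a ≤ y ∨ b ≤ y} := by
      ext z; simp only [Set.mem_diff, Set.mem_inter_iff, Set.mem_setOf_eq]; tauto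
    rw [hdiff]
    have haS : a ∈ I ∩ {y | a ≤ y ∨ b ≤ y} := ⟨ha, Or.inl le_rfl⟩
    have hbS : b ∈ I ∩ {y | a ≤ y ∨ b ≤ y} := ⟨hb, Or.inr le_rfl⟩
    have hcS : c ∈ I ∩ {y | a ≤ y ∨ b ≤ y} := ⟨hc, Or.inl hac.le⟩
    refine connIn_hub haS (fun z hz => ?_)
    rcases hz.2 with hz2 | hz2
    · exact Relation.ReflTransGen.single ⟨hz, haS, Or.inr hz2⟩
    · exact Relation.ReflTransGen.head ⟨hz, hbS, Or.inr hz2⟩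
        (Relation.ReflTransGen.head ⟨hbS, hcS, Or.inl hbc.le⟩
          (Relation.ReflTransGen.single ⟨hcS, haS, Or.inr hac.le⟩))

private lemma ext_rel_out {I : Set P} (hI : IsLowerSet I) (a b : P) {c g h : P}
    (hcg : c < g) (hch : c < h) (hc : c ∉ I) :
    I ⊂ ExtIdeal I a b c g h ∧ ConnIn (ExtIdeal I a b c g h \ I) := by
  have hE : ExtIdeal I a b c g h = I ∪ {y | y ≤ g ∨ y ≤ h} := by simp [ExtIdeal, hc]
  have hg : g ∉ I := fun hg => hc (hI hcg.le hg)
  have hh : h ∉ I := fun hh => hc (hI hch.le hh)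
  rw [hE]
  constructor
  · exact ⟨Set.subset_union_left, fun hsub => hc (hsub (Or.inr (Or.inl hcg.le)))⟩
  · have hcS : c ∈ (I ∪ {y | y ≤ g ∨ y ≤ h}) \ I := ⟨Or.inr (Or.inl hcg.le), hc⟩
    have hgS : g ∈ (I ∪ {y | y ≤ g ∨ y ≤ h}) \ I := ⟨Or.inr (Or.inl le_rfl), hg⟩
    have hhS : h ∈ (I ∪ {y | y ≤ g ∨ y ≤ h}) \ I := ⟨Or.inr (Or.inr le_rfl), hh⟩
    refine connIn_hub hcS (fun z hz => ?_)
    rcases hz.1 with h1 | h1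
    · exact absurd h1 hz.2
    rcases h1 with h1 | h1
    · exact Relation.ReflTransGen.head ⟨hz, hgS, Or.inl h1⟩
        (Relation.ReflTransGen.single ⟨hgS, hcS, Or.inr hcg.le⟩)
    · exact Relation.ReflTransGen.head ⟨hz, hhS, Or.inl h1⟩
        (Relation.ReflTransGen.single ⟨hhS, hcS, Or.inr hch.le⟩)

private lemma ext_ne_nbr {I : Set P} (hI : IsLowerSet I) {a b c g h : P}
    (hac : a < c) (hbc : b < c) (hcg : c < g) (hch : c < h)
    (hab : ¬ a ≤ b) (hba : ¬ b ≤ a) (hgh : ¬ g ≤ h) (hhg : ¬ h ≤ g)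
    (x : P) : ExtIdeal I a b c g h ≠ Nbr I x := by
  intro heq
  by_cases hc : c ∈ I
  · have hE : ExtIdeal I a b c g h = I \ {y | a ≤ y ∨ b ≤ y} := by simp [ExtIdeal, hc]
    have ha : a ∈ I := hI hac.le hc
    have hb : b ∈ I := hI hbc.le hc
    by_cases hx : x ∈ I
    · rw [hE, nbr_eq_in hx] at heq
      have h1 : a ∉ I \ {y | x ≤ y} := by
        rw [← heq]; simp only [Set.mem_diff, Set.mem_setOf_eq, not_and, not_not]
        exact fun _ => Or.inl le_rfl
      have h2 : b ∉ I \ {y | x ≤ y} := by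
        rw [← heq]; simp only [Set.mem_diff, Set.mem_setOf_eq, not_and, not_not]
        exact fun _ => Or.inr le_rfl
      simp only [Set.mem_diff, Set.mem_setOf_eq, not_and, not_not] at h1 h2
      have hxa : x ≤ a := h1 ha
      have hxb : x ≤ b := h2 hb
      have h3 : x ∉ I \ {y | a ≤ y ∨ b ≤ y} := by
        rw [heq]; simp [hx]
      simp only [Set.mem_diff, Set.mem_setOf_eq, not_and, not_not] at h3
      rcases h3 hx with h4 | h4
      · exact hab (h4.trans hxb)
      · exact hba (h4.trans hxa)
    · have : x ∈ Nbr I x := by rw [nbr_eq_out hx]; exact Or.inr le_rfl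
      rw [← heq, hE] at this
      exact hx this.1
  · have hE : ExtIdeal I a b c g h = I ∪ {y | y ≤ g ∨ y ≤ h} := by simp [ExtIdeal, hc]
    have hg : g ∉ I := fun hg => hc (hI hcg.le hg)
    have hh : h ∉ I := fun hh => hc (hI hch.le hh)
    by_cases hx : x ∈ I
    · have : g ∈ ExtIdeal I a b c g h := by rw [hE]; exact Or.inr (Or.inl le_rfl)
      rw [heq, nbr_eq_in hx] at this
      exact hg this.1
    · rw [hE, nbr_eq_out hx] at heq
      have h1 : g ∈ I ∪ {y | y ≤ x} := by rw [← heq]; exact Or.inr (Or.inl le_rfl)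
      have h2 : h ∈ I ∪ {y | y ≤ x} := by rw [← heq]; exact Or.inr (Or.inr le_rfl)
      have hgx : g ≤ x := h1.resolve_left hg
      have hhx : h ≤ x := h2.resolve_left hh
      have h3 : x ∈ I ∪ {y | y ≤ g ∨ y ≤ h} := by rw [heq]; exact Or.inr le_rfl
      rcases h3 with h3 | h3; · exact hx h3
      rcases h3 with h3 | h3
      · exact hhg (hhx.trans h3)
      · exact hgh (hgx.trans h3)

private lemma antichain_connIn_subsingleton {B : Set P}
    (hB : IsAntichain (· ≤ ·) B) (hc : ConnIn B) : B.Subsingleton := by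
  intro x hx y hy
  have step : ∀ u v : P, (u ∈ B ∧ v ∈ B ∧ (u ≤ v ∨ v ≤ u)) → u = v := by
    rintro u v ⟨hu, hv, huv | hvu⟩
    · by_contra hne; exact hB hu hv hne huv
    · by_contra hne; exact (hB hv hu (Ne.symm hne) hvu).elim
  have key2 : ∀ u v : P,
      Relation.ReflTransGen (fun u v => u ∈ B ∧ v ∈ B ∧ (u ≤ v ∨ v ≤ u)) u v → u = v := by
    intro u v hrel
    induction hrel with
    | refl => rfl
    | tail _ hstep ih => exact ih.trans (step _ _ hstep)
  exact key2 x y (hc x hx y hy)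

end Aux

private lemma order_deg {P : Type*} [Fintype P] [PartialOrder P] (hX : ContainsX P)
    (v : {I : Set P // IsLowerSet I}) :
    Fintype.card P + 1 ≤ ((orderSkeleton P).neighborSet v).ncard := by
  classical
  obtain ⟨a, b, c, g, h, hac, hbc, hcg, hch, hab, hba, hgh, hhg⟩ := hX
  obtain ⟨I, hI⟩ := v
  set F : Option P → {I : Set P // IsLowerSet I} := fun o =>
    match o with
    | none => ⟨ExtIdeal I a b c g h, ext_lower hI a b c g h⟩
    | some x => ⟨Nbr I x, nbr_lower hI x⟩ with hF
  have hFinj : Function.Injective F := by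
    intro o₁ o₂ heq
    match o₁, o₂ with
    | none, none => rfl
    | some x, some y =>
      have : Nbr I x = Nbr I y := congrArg Subtype.val heq
      exact congrArg some (nbr_inj I this)
    | none, some x =>
      exact absurd (congrArg Subtype.val heq)
        (ext_ne_nbr hI hac hbc hcg hch hab hba hgh hhg x)
    | some x, none =>
      exact absurd (congrArg Subtype.val heq).symm
        (ext_ne_nbr hI hac hbc hcg hch hab hba hgh hhg x)
  have hrange : Set.range F ⊆ (orderSkeleton P).neighborSet ⟨I, hI⟩ := by
    rintro _ ⟨o, rfl⟩
    rw [SimpleGraph.mem_neighborSet, orderSkeleton, SimpleGraph.fromRel_adj]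
    match o with
    | none =>
      by_cases hc : c ∈ I
      · obtain ⟨hsub, hconn⟩ := ext_rel_in hI g h hac hbc hc
        exact ⟨fun heq => hsub.ne (congrArg Subtype.val heq).symm,
          Or.inr ⟨hsub, hconn⟩⟩
      · obtain ⟨hsub, hconn⟩ := ext_rel_out hI a b hcg hch hc
        exact ⟨fun heq => hsub.ne (congrArg Subtype.val heq), Or.inl ⟨hsub, hconn⟩⟩
    | some x =>
      by_cases hx : x ∈ I
      · obtain ⟨hsub, hconn⟩ := nbr_rel_in hx
        exact ⟨fun heq => hsub.ne (congrArg Subtype.val heq).symm,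
          Or.inr ⟨hsub, hconn⟩⟩
      · obtain ⟨hsub, hconn⟩ := nbr_rel_out hx
        exact ⟨fun heq => hsub.ne (congrArg Subtype.val heq), Or.inl ⟨hsub, hconn⟩⟩
  have h1 : (Set.range F).ncard = Fintype.card P + 1 := by
    rw [← Set.image_univ, Set.ncard_image_of_injective _ hFinj, Set.ncard_univ,
      Nat.card_eq_fintype_card, Fintype.card_option]
  calc Fintype.card P + 1 = (Set.range F).ncard := h1.symm
    _ ≤ ((orderSkeleton P).neighborSet ⟨I, hI⟩).ncard :=
        Set.ncard_le_ncard hrange (Set.toFinite _)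

private lemma chain_deg {P : Type*} [Fintype P] [PartialOrder P] :
    ∃ w : {A : Set P // IsAntichain (· ≤ ·) A},
      ((chainSkeleton P).neighborSet w).ncard ≤ Fintype.card P := by
  classical
  refine ⟨⟨∅, by simp [IsAntichain]⟩, ?_⟩
  set w : {A : Set P // IsAntichain (· ≤ ·) A} := ⟨∅, by simp [IsAntichain]⟩ with hw
  have key : ∀ B ∈ (chainSkeleton P).neighborSet w,
      ∃ x : P, B.1 = {x} := by
    intro B hB
    rw [SimpleGraph.mem_neighborSet, chainSkeleton, SimpleGraph.fromRel_adj] at hB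
    obtain ⟨hne, hrel⟩ := hB
    have hconn : ConnIn B.1 := by
      rcases hrel with h1 | h1
      · simpa [hw] using h1
      · simpa [hw] using h1
    have hss : B.1.Subsingleton := antichain_connIn_subsingleton B.2 hconn
    have hBne : B.1.Nonempty := by
      rw [Set.nonempty_iff_ne_empty]
      intro hemp
      exact hne (Subtype.ext (by simp [hw, hemp])).symm
    obtain ⟨x, hx⟩ := hBne
    exact ⟨x, Set.eq_singleton_iff_unique_mem.2 ⟨hx, fun y hy => hss hy hx⟩⟩
  set G : ((chainSkeleton P).neighborSet w) → P := fun B => (key B.1 B.2).choose with hG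
  have hGinj : Function.Injective G := by
    intro B₁ B₂ heq
    have h1 : (B₁.1.1 : Set P) = {G B₁} := (key B₁.1 B₁.2).choose_spec
    have h2 : (B₂.1.1 : Set P) = {G B₂} := (key B₂.1 B₂.2).choose_spec
    apply Subtype.ext; apply Subtype.ext
    rw [h1, h2, heq]
  calc ((chainSkeleton P).neighborSet w).ncard
      = Nat.card ((chainSkeleton P).neighborSet w) :=
        (Nat.card_coe_set_eq _).symm
    _ ≤ Nat.card P := Nat.card_le_card_of_injective G hGinj
    _ = Fintype.card P := Nat.card_eq_fintype_card

theorem stmt15 {P : Type*} [Fintype P] [PartialOrder P] (hX : ContainsX P) :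
    degMultiset (orderSkeleton P) ≠ degMultiset (chainSkeleton P) ∧
    (∀ v : {I : Set P // IsLowerSet I},
      Fintype.card P + 1 ≤ ((orderSkeleton P).neighborSet v).ncard) ∧
    (∃ w : {A : Set P // IsAntichain (· ≤ ·) A},
      ((chainSkeleton P).neighborSet w).ncard ≤ Fintype.card P) := by
  obtain ⟨w, hwdeg⟩ := chain_deg (P := P)
  refine ⟨?_, fun v => order_deg hX v, ⟨w, hwdeg⟩⟩
  intro heq
  have hmem : ((chainSkeleton P).neighborSet w).ncard ∈ degMultiset (chainSkeleton P) := by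
    unfold degMultiset
    exact Multiset.mem_map.2 ⟨w, Finset.mem_univ w, rfl⟩
  rw [← heq] at hmem
  unfold degMultiset at hmem
  obtain ⟨v, _, hv⟩ := Multiset.mem_map.1 hmem
  have := order_deg hX v
  omega
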